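/- Let P ∈ ℝ^{n×n} be doubly stochastic with second largest singular value σ₂(P) < 1; let χ ⊆ ℝ^d be a nonempty compact convex set; let ψ: ℝ^d → ℝ be 1-strongly convex with respect to the Euclidean norm; and let (α_t)_{t≥0} be a positive non-increasing sequence. Suppose g_{i,t} ∈ ℝ^d and matrices A_i together with vectors λ_{i,t} satisfy ‖g_{i,t}‖ ≤ L_f and ‖A_iᵀλ_{i,t}‖ ≤ ζ^max for all i ∈ [n], t ≥ 1. Define z_{i,1} = 0, z_{i,t+1} = Σ_{j=1}^n P_{ji} z_{j,t} + g_{i,t} + A_iᵀλ_{i,t+1}, let z̄_t = (1/n)Σ_{i=1}^n z_{i,t}, and define x_{i,t} = argmin_{x∈χ}{⟨z_{i,t}, x⟩ + (1/α_{t−1})ψ(x)} and θ_t = argmin_{x∈χ}{⟨z̄_t, x⟩ + (1/α_{t−1})ψ(x)}. Then for all i ∈ [n] and t ≥ 1, ‖θ_t − x_{i,t}‖ ≤ α_{t−1}·√n·(L_f + ζ^max)/(1 − σ₂(P)). -/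

import Mathlib

open Matrix
open scoped RealInnerProductSpace

/-- The singular values of a square real matrix `M`, namely the square roots of the
eigenvalues of the Hermitian matrix `M * Mᴴ` (with multiplicity, in arbitrary order). -/
noncomputable def singVals {n : ℕ} (M : Matrix (Fin n) (Fin n) ℝ) : Fin n → ℝ :=
  fun i => Real.sqrt ((Matrix.isHermitian_mul_conjTranspose_self M).eigenvalues i)

/-- The second largest singular value (with multiplicity) of a square real matrix. -/
noncomputable def sigma2 {n : ℕ} (M : Matrix (Fin n) (Fin n) ℝ) : ℝ :=
  sSup {s : ℝ | ∃ i j : Fin n, i ≠ j ∧ s = min (singVals M i) (singVals M j)}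

/-- `ψ` is 1-strongly convex with respect to the Euclidean norm. -/
def StronglyConvexOne {d : ℕ} (ψ : EuclideanSpace ℝ (Fin d) → ℝ) : Prop :=
  ∀ x y : EuclideanSpace ℝ (Fin d), ∀ a b : ℝ, 0 ≤ a → 0 ≤ b → a + b = 1 →
    ψ (a • x + b • y) ≤ a * ψ x + b * ψ y - a * b / 2 * ‖x - y‖ ^ 2

lemma sigma2_set_finite {n : ℕ} (M : Matrix (Fin n) (Fin n) ℝ) :
    {s : ℝ | ∃ i j : Fin n, i ≠ j ∧ s = min (singVals M i) (singVals M j)}.Finite := by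
  apply Set.Finite.subset (Set.finite_range
    (fun p : Fin n × Fin n => min (singVals M p.1) (singVals M p.2)))
  rintro s ⟨i, j, -, rfl⟩
  exact ⟨(i, j), rfl⟩

lemma sigma2_nonneg {n : ℕ} (M : Matrix (Fin n) (Fin n) ℝ) : 0 ≤ sigma2 M := by
  rcases Set.eq_empty_or_nonempty
    {s : ℝ | ∃ i j : Fin n, i ≠ j ∧ s = min (singVals M i) (singVals M j)} with h | h
  · simp [sigma2, h, Real.sSup_empty]
  · obtain ⟨s, i, j, hij, rfl⟩ := h
    refine le_trans (le_min (Real.sqrt_nonneg _) (Real.sqrt_nonneg _))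
      (le_csSup ((sigma2_set_finite M).bddAbove) ⟨i, j, hij, rfl⟩)

lemma min_le_sigma2 {n : ℕ} (M : Matrix (Fin n) (Fin n) ℝ) {i j : Fin n} (hij : i ≠ j) :
    min (singVals M i) (singVals M j) ≤ sigma2 M :=
  le_csSup ((sigma2_set_finite M).bddAbove) ⟨i, j, hij, rfl⟩

lemma expand_onb {n : ℕ} (b : OrthonormalBasis (Fin n) ℝ (EuclideanSpace ℝ (Fin n)))
    (u : EuclideanSpace ℝ (Fin n)) (i : Fin n) :
    u i = ∑ k, (∑ l, b k l * u l) * b k i := by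
  conv_lhs => rw [← b.sum_repr' u]
  rw [WithLp.ofLp_sum, Finset.sum_apply]
  refine Finset.sum_congr rfl fun k _ => ?_
  rw [PiLp.smul_apply, PiLp.inner_apply]
  simp [mul_comm]

/-- Key spectral contraction lemma. -/
lemma spectral {n : ℕ} (P : Matrix (Fin n) (Fin n) ℝ)
    (hPnn : ∀ i j, 0 ≤ P i j) (hProw : ∀ i, ∑ j, P i j = 1) (hPcol : ∀ j, ∑ i, P i j = 1)
    (hσ : sigma2 P < 1) (w : Fin n → ℝ) (hw : ∑ j, w j = 0) :
    ∑ i, (∑ j, P j i * w j) ^ 2 ≤ sigma2 P ^ 2 * ∑ j, w j ^ 2 := by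
  rcases Nat.eq_zero_or_pos n with hn | hn
  · subst hn; simp
  have hS := Matrix.isHermitian_mul_conjTranspose_self P
  set v : Fin n → Fin n → ℝ := fun k => ⇑(hS.eigenvectorBasis k) with hv
  set μ : Fin n → ℝ := fun k => hS.eigenvalues k with hμ
  have hSapp : ∀ i j, (P * Pᴴ) i j = ∑ k, P i k * P j k := by
    intro i j; simp [Matrix.mul_apply, Matrix.conjTranspose_apply]
  have hSsymm : ∀ i j, (P * Pᴴ) i j = (P * Pᴴ) j i := by
    intro i j; rw [hSapp, hSapp]; exact Finset.sum_congr rfl fun k _ => mul_comm _ _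
  have horth : ∀ k l, ∑ m, v k m * v l m = (if k = l then (1:ℝ) else 0) := by
    intro k l
    have h0 := hS.eigenvectorBasis.orthonormal
    rw [orthonormal_iff_ite] at h0
    have h := h0 k l
    rw [PiLp.inner_apply] at h
    simp at h
    rw [← h]
    exact Finset.sum_congr rfl fun m _ => mul_comm _ _
  have heig : ∀ k, (P * Pᴴ) *ᵥ v k = μ k • v k := fun k => hS.mulVec_eigenvectorBasis k
  have hexp : ∀ (u : Fin n → ℝ) (i : Fin n), u i = ∑ k, (∑ l, v k l * u l) * v k i :=
    fun u i => expand_onb hS.eigenvectorBasis (WithLp.toLp 2 u) i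
  have hbil : ∀ (a b : Fin n → ℝ),
      ∑ i, (∑ k, a k * v k i) * (∑ l, b l * v l i) = ∑ k, a k * b k := by
    intro a b
    have h1 : ∀ i : Fin n, (∑ k, a k * v k i) * (∑ l, b l * v l i)
        = ∑ k, ∑ l, (a k * b l) * (v k i * v l i) := by
      intro i
      rw [Finset.sum_mul_sum]
      exact Finset.sum_congr rfl fun k _ => Finset.sum_congr rfl fun l _ => by ring
    calc ∑ i, (∑ k, a k * v k i) * (∑ l, b l * v l i)
        = ∑ i, ∑ k, ∑ l, (a k * b l) * (v k i * v l i) :=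
          Finset.sum_congr rfl fun i _ => h1 i
      _ = ∑ k, ∑ l, (a k * b l) * (∑ i, v k i * v l i) := by
          rw [Finset.sum_comm]
          refine Finset.sum_congr rfl fun k _ => ?_
          rw [Finset.sum_comm]
          exact Finset.sum_congr rfl fun l _ => (Finset.mul_sum _ _ _).symm
      _ = ∑ k, a k * b k := by
          simp only [horth, mul_ite, mul_one, mul_zero]
          simp
  -- mulVec identity: ∑ i, w i * (S *ᵥ u) i = bilinear in coefficients
  have hmv : ∀ (u : Fin n → ℝ), ∑ i, (∑ j, P j i * u j) ^ 2 = ∑ i, u i * ((P * Pᴴ) *ᵥ u) i := by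
    intro u
    have h1 : ∀ i, u i * ((P * Pᴴ) *ᵥ u) i = ∑ j, ∑ k, P i k * P j k * (u i * u j) := by
      intro i
      rw [Matrix.mulVec, dotProduct]
      rw [Finset.mul_sum]
      refine Finset.sum_congr rfl fun j _ => ?_
      rw [hSapp, Finset.sum_mul, Finset.mul_sum]
      exact Finset.sum_congr rfl fun k _ => by ring
    calc ∑ i, (∑ j, P j i * u j) ^ 2
        = ∑ i, (∑ j, P j i * u j) * (∑ k, P k i * u k) := by
          exact Finset.sum_congr rfl fun i _ => sq _
      _ = ∑ k, ∑ i, ∑ j, P i k * P j k * (u i * u j) := by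
          refine (Finset.sum_congr rfl fun k _ => ?_)
          rw [Finset.sum_mul_sum]
          exact Finset.sum_congr rfl fun i _ => Finset.sum_congr rfl fun j _ => by ring
      _ = ∑ i, ∑ j, ∑ k, P i k * P j k * (u i * u j) := by
          rw [Finset.sum_comm]
          exact Finset.sum_congr rfl fun i _ => Finset.sum_comm
      _ = ∑ i, u i * ((P * Pᴴ) *ᵥ u) i := by
          exact Finset.sum_congr rfl fun i _ => (h1 i).symm
  -- eigenvalue representation
  have hμrep : ∀ k, μ k = ∑ i, (∑ j, P j i * v k j) ^ 2 := by
    intro k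
    have h := hmv (v k)
    rw [heig k] at h
    rw [h]
    have : ∀ i, v k i * (μ k • v k) i = μ k * (v k i * v k i) := by
      intro i; simp only [Pi.smul_apply, smul_eq_mul]; ring
    rw [Finset.sum_congr rfl fun i _ => this i, ← Finset.mul_sum, horth k k]
    simp
  have hμ0 : ∀ k, 0 ≤ μ k := by
    intro k; rw [hμrep k]; positivity
  have hμ1 : ∀ k, μ k ≤ 1 := by
    intro k
    rw [hμrep k]
    have hjen : ∀ i, (∑ j, P j i * v k j) ^ 2 ≤ ∑ j, P j i * v k j ^ 2 := by
      intro i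
      have hcs := Finset.sum_mul_sq_le_sq_mul_sq Finset.univ
        (fun j => Real.sqrt (P j i)) (fun j => Real.sqrt (P j i) * v k j)
      have h1 : ∀ j : Fin n, Real.sqrt (P j i) * (Real.sqrt (P j i) * v k j)
          = P j i * v k j := by
        intro j; rw [← mul_assoc, Real.mul_self_sqrt (hPnn j i)]
      have h2 : ∀ j : Fin n, Real.sqrt (P j i) ^ 2 = P j i :=
        fun j => Real.sq_sqrt (hPnn j i)
      have h3 : ∀ j : Fin n, (Real.sqrt (P j i) * v k j) ^ 2 = P j i * v k j ^ 2 := by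
        intro j; rw [mul_pow, h2 j]
      rw [Finset.sum_congr rfl fun j _ => h1 j] at hcs
      rw [Finset.sum_congr rfl fun j _ => h2 j] at hcs
      rw [Finset.sum_congr rfl fun j _ => h3 j] at hcs
      rw [hPcol i, one_mul] at hcs
      exact hcs
    calc ∑ i, (∑ j, P j i * v k j) ^ 2 ≤ ∑ i, ∑ j, P j i * v k j ^ 2 :=
          Finset.sum_le_sum fun i _ => hjen i
      _ = ∑ j, (∑ i, P j i) * v k j ^ 2 := by
          rw [Finset.sum_comm]
          exact Finset.sum_congr rfl fun j _ => (Finset.sum_mul _ _ _).symm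
      _ = 1 := by
          rw [Finset.sum_congr rfl fun j _ => by rw [hProw j, one_mul]]
          have h := horth k k
          rw [if_pos rfl] at h
          rw [← h]
          exact Finset.sum_congr rfl fun j _ => sq (v k j)
  -- symmetric form
  have hsym : ∀ (a b : Fin n → ℝ),
      ∑ i, a i * ((P * Pᴴ) *ᵥ b) i = ∑ i, ((P * Pᴴ) *ᵥ a) i * b i := by
    intro a b
    calc ∑ i, a i * ((P * Pᴴ) *ᵥ b) i
        = ∑ i, ∑ j, (P * Pᴴ) i j * (a i * b j) := by
          refine Finset.sum_congr rfl fun i _ => ?_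
          rw [Matrix.mulVec, dotProduct, Finset.mul_sum]
          exact Finset.sum_congr rfl fun j _ => by ring
      _ = ∑ j, ∑ i, (P * Pᴴ) j i * (a i * b j) := by
          rw [Finset.sum_comm]
          exact Finset.sum_congr rfl fun j _ => Finset.sum_congr rfl fun i _ => by
            rw [hSsymm]
      _ = ∑ j, ((P * Pᴴ) *ᵥ a) j * b j := by
          refine Finset.sum_congr rfl fun j _ => ?_
          rw [Matrix.mulVec, dotProduct, Finset.sum_mul]
          exact Finset.sum_congr rfl fun i _ => by ring
  -- ones is fixed
  have hones : (P * Pᴴ) *ᵥ (fun _ => (1:ℝ)) = fun _ => (1:ℝ) := by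
    funext i
    rw [Matrix.mulVec, dotProduct]
    simp only [mul_one]
    calc ∑ j, (P * Pᴴ) i j = ∑ j, ∑ k, P i k * P j k :=
          Finset.sum_congr rfl fun j _ => hSapp i j
      _ = ∑ k, P i k * (∑ j, P j k) := by
          rw [Finset.sum_comm]
          exact Finset.sum_congr rfl fun k _ => (Finset.mul_sum _ _ _).symm
      _ = 1 := by
          rw [Finset.sum_congr rfl fun k _ => by rw [hPcol k, mul_one], hProw i]
  set dd : Fin n → ℝ := fun k => ∑ l, v k l with hdd
  have hd : ∀ k, dd k * (μ k - 1) = 0 := by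
    intro k
    have h1 : ∑ i, v k i * ((P * Pᴴ) *ᵥ (fun _ => (1:ℝ))) i = dd k := by
      rw [hones]; simp [dd]
    have h2 : ∑ i, v k i * ((P * Pᴴ) *ᵥ (fun _ => (1:ℝ))) i = μ k * dd k := by
      rw [hsym, heig k]
      simp only [Pi.smul_apply, smul_eq_mul, mul_one]
      rw [← Finset.mul_sum]
    have := h1.symm.trans h2
    -- dd k = μ k * dd k
    nlinarith [this]
  have hdexp : ∀ i : Fin n, (1:ℝ) = ∑ k, dd k * v k i := by
    intro i
    have h := hexp (fun _ => (1:ℝ)) i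
    simpa [dd] using h
  have hex : ∃ k, dd k ≠ 0 := by
    by_contra h
    push_neg at h
    have h1 := hdexp ⟨0, hn⟩
    simp only [h, zero_mul, Finset.sum_const_zero] at h1
    exact one_ne_zero h1
  obtain ⟨k₀, hk₀⟩ := hex
  have hμk₀ : μ k₀ = 1 := by
    have := hd k₀
    rcases mul_eq_zero.1 this with h | h
    · exact absurd h hk₀
    · linarith
  have hsv : ∀ k, singVals P k = Real.sqrt (μ k) := fun k => rfl
  have hle : ∀ k, k ≠ k₀ → μ k ≤ sigma2 P ^ 2 := by
    intro k hk
    have hmin := min_le_sigma2 P (Ne.symm hk)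
    rw [hsv, hsv, hμk₀, Real.sqrt_one] at hmin
    have hs1 : Real.sqrt (μ k) ≤ 1 := by
      rw [show (1:ℝ) = Real.sqrt 1 by rw [Real.sqrt_one]]
      exact Real.sqrt_le_sqrt (hμ1 k)
    rw [min_comm, min_eq_left hs1] at hmin
    calc μ k = Real.sqrt (μ k) ^ 2 := (Real.sq_sqrt (hμ0 k)).symm
      _ ≤ sigma2 P ^ 2 := by
          apply pow_le_pow_left₀ (Real.sqrt_nonneg _) hmin 2
  have hdk : ∀ k, k ≠ k₀ → dd k = 0 := by
    intro k hk
    rcases mul_eq_zero.1 (hd k) with h | h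
    · exact h
    · exfalso
      nlinarith [hle k hk, hσ, sigma2_nonneg P]
  have hvk₀ : ∀ i : Fin n, v k₀ i = (dd k₀)⁻¹ := by
    intro i
    have h := hdexp i
    rw [Finset.sum_eq_single k₀ (fun k _ hk => by rw [hdk k hk, zero_mul])
      (fun h => absurd (Finset.mem_univ k₀) h)] at h
    field_simp at h ⊢
    linarith
  set c : Fin n → ℝ := fun k => ∑ l, v k l * w l with hc
  have hc₀ : c k₀ = 0 := by
    simp only [hc]
    rw [Finset.sum_congr rfl fun l _ => by rw [hvk₀ l], ← Finset.mul_sum, hw, mul_zero]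
  -- coefficient of S*w
  have hSwcoef : ∀ k, ∑ l, v k l * ((P * Pᴴ) *ᵥ w) l = μ k * c k := by
    intro k
    rw [hsym, heig k]
    simp only [Pi.smul_apply, smul_eq_mul, hc]
    rw [Finset.mul_sum]
    exact Finset.sum_congr rfl fun l _ => by ring
  have hfin : ∑ i, (∑ j, P j i * w j) ^ 2 = ∑ k, c k * (μ k * c k) := by
    rw [hmv w]
    calc ∑ i, w i * ((P * Pᴴ) *ᵥ w) i
        = ∑ i, (∑ k, c k * v k i) * (∑ l, (μ l * c l) * v l i) := by
          refine Finset.sum_congr rfl fun i _ => ?_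
          congr 1
          · exact hexp w i
          · rw [hexp ((P * Pᴴ) *ᵥ w) i]
            exact Finset.sum_congr rfl fun k _ => by rw [hSwcoef k]
      _ = ∑ k, c k * (μ k * c k) := hbil c (fun l => μ l * c l)
  have hw2 : ∑ j, w j ^ 2 = ∑ k, c k * c k := by
    calc ∑ j, w j ^ 2 = ∑ j, (∑ k, c k * v k j) * (∑ l, c l * v l j) := by
          refine Finset.sum_congr rfl fun j _ => ?_
          rw [sq, ← hexp w j]
      _ = ∑ k, c k * c k := hbil c c
  rw [hfin, hw2, Finset.mul_sum]
  refine Finset.sum_le_sum fun k _ => ?_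
  rcases eq_or_ne k k₀ with rfl | hk
  · rw [hc₀]; ring_nf; exact le_refl 0
  · have := hle k hk
    nlinarith [sq_nonneg (c k)]


lemma growth {d : ℕ} {χ : Set (EuclideanSpace ℝ (Fin d))} (hχconv : Convex ℝ χ)
    {ψ : EuclideanSpace ℝ (Fin d) → ℝ} (hψ : StronglyConvexOne ψ) {η : ℝ} (hη : 0 < η)
    (z xs ys : EuclideanSpace ℝ (Fin d)) (hx : xs ∈ χ) (hy : ys ∈ χ)
    (hxm : ∀ w ∈ χ, ⟪z, xs⟫ + η⁻¹ * ψ xs ≤ ⟪z, w⟫ + η⁻¹ * ψ w) :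
    η⁻¹ / 2 * ‖xs - ys‖ ^ 2 ≤ (⟪z, ys⟫ + η⁻¹ * ψ ys) - (⟪z, xs⟫ + η⁻¹ * ψ xs) := by
  set D := ‖xs - ys‖ ^ 2 with hD
  set K := (⟪z, ys⟫ + η⁻¹ * ψ ys) - (⟪z, xs⟫ + η⁻¹ * ψ xs) with hK
  have key : ∀ a : ℝ, a ∈ Set.Ioo (0:ℝ) 1 → η⁻¹ * ((1 - a) / 2) * D ≤ K := by
    intro a ⟨ha0, ha1⟩
    have hb0 : (0:ℝ) ≤ 1 - a := by linarith
    have hmem : (1 - a) • xs + a • ys ∈ χ := hχconv hx hy hb0 ha0.le (by ring)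
    have h1 := hxm _ hmem
    have h2 : ⟪z, (1 - a) • xs + a • ys⟫ = (1 - a) * ⟪z, xs⟫ + a * ⟪z, ys⟫ := by
      rw [inner_add_right, inner_smul_right, inner_smul_right]
    have h3 := hψ xs ys (1 - a) a hb0 ha0.le (by ring)
    rw [← hD] at h3
    rw [h2] at h1
    have h4 : ⟪z, xs⟫ + η⁻¹ * ψ xs ≤ (1 - a) * ⟪z, xs⟫ + a * ⟪z, ys⟫
        + η⁻¹ * ((1 - a) * ψ xs + a * ψ ys - (1 - a) * a / 2 * D) := by
      refine h1.trans ?_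
      have := mul_le_mul_of_nonneg_left h3 (le_of_lt (inv_pos.2 hη))
      linarith
    have h5 : a * (⟪z, xs⟫ + η⁻¹ * ψ xs) + η⁻¹ * ((1 - a) * a / 2) * D
        ≤ a * (⟪z, ys⟫ + η⁻¹ * ψ ys) := by nlinarith [h4]
    have h6 : η⁻¹ * ((1 - a) * a / 2) * D ≤ a * K := by
      rw [hK]; nlinarith [h5]
    have h7 : a * (η⁻¹ * ((1 - a) / 2) * D) ≤ a * K := by nlinarith [h6]
    exact le_of_mul_le_mul_left h7 ha0
  -- take the limit a → 0⁺
  have hlim : Filter.Tendsto (fun a : ℝ => η⁻¹ * ((1 - a) / 2) * D) (nhdsWithin 0 (Set.Ioi 0))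
      (nhds (η⁻¹ * ((1 - 0) / 2) * D)) := by
    apply Filter.Tendsto.mono_left _ nhdsWithin_le_nhds
    exact (Continuous.tendsto (by continuity) 0)
  have : η⁻¹ * ((1 - 0) / 2) * D ≤ K := by
    refine le_of_tendsto hlim ?_
    filter_upwards [Ioo_mem_nhdsGT_of_mem
      (show (0:ℝ) ∈ Set.Ico (0:ℝ) 1 by constructor <;> norm_num)] with a ha using key a ha
  have h' : η⁻¹ / 2 * D = η⁻¹ * ((1 - 0) / 2) * D := by ring
  rw [h']; exact this

lemma stability {d : ℕ} {χ : Set (EuclideanSpace ℝ (Fin d))} (hχconv : Convex ℝ χ)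
    {ψ : EuclideanSpace ℝ (Fin d) → ℝ} (hψ : StronglyConvexOne ψ) {η : ℝ} (hη : 0 < η)
    (z z' xs ys : EuclideanSpace ℝ (Fin d)) (hx : xs ∈ χ) (hy : ys ∈ χ)
    (hxm : ∀ w ∈ χ, ⟪z, xs⟫ + η⁻¹ * ψ xs ≤ ⟪z, w⟫ + η⁻¹ * ψ w)
    (hym : ∀ w ∈ χ, ⟪z', ys⟫ + η⁻¹ * ψ ys ≤ ⟪z', w⟫ + η⁻¹ * ψ w) :
    ‖xs - ys‖ ≤ η * ‖z - z'‖ := by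
  have g1 := growth hχconv hψ hη z xs ys hx hy hxm
  have g2 := growth hχconv hψ hη z' ys xs hy hx hym
  have hnorm : ‖ys - xs‖ = ‖xs - ys‖ := norm_sub_rev ys xs
  rw [hnorm] at g2
  have hsum : η⁻¹ * ‖xs - ys‖ ^ 2 ≤ ⟪z - z', ys - xs⟫ := by
    have h : ⟪z - z', ys - xs⟫ = (⟪z, ys⟫ - ⟪z, xs⟫) + (⟪z', xs⟫ - ⟪z', ys⟫) := by
      rw [inner_sub_left, inner_sub_right, inner_sub_right]; ring
    rw [h]; linarith
  have hcs : ⟪z - z', ys - xs⟫ ≤ ‖z - z'‖ * ‖ys - xs‖ := real_inner_le_norm _ _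
  rw [hnorm] at hcs
  rcases eq_or_lt_of_le (norm_nonneg (xs - ys)) with h0 | h0
  · rw [← h0]; positivity
  · have h1 : η⁻¹ * ‖xs - ys‖ ^ 2 ≤ ‖z - z'‖ * ‖xs - ys‖ := hsum.trans hcs
    rw [sq] at h1
    have h2 : η⁻¹ * ‖xs - ys‖ ≤ ‖z - z'‖ := by
      have := mul_le_mul_of_nonneg_right (le_of_eq (rfl : η⁻¹ * ‖xs - ys‖ = η⁻¹ * ‖xs - ys‖)) (le_of_lt h0)
      nlinarith [h1, h0]
    calc ‖xs - ys‖ = η * (η⁻¹ * ‖xs - ys‖) := by field_simp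
      _ ≤ η * ‖z - z'‖ := by
          exact mul_le_mul_of_nonneg_left h2 hη.le

lemma sq_le_imp {a b : ℝ} (ha : 0 ≤ a) (hb : 0 ≤ b) (h : a ^ 2 ≤ b ^ 2) : a ≤ b := by
  nlinarith [sq_nonneg (a - b), sq_nonneg (a + b)]

set_option maxHeartbeats 2000000 in
/-- network-effect bound for OD-ADMM via distributed dual averaging:
`‖θ_t - x_{i,t}‖ ≤ α_{t-1} √n (L_f + ζ^max)/(1 - σ₂(P))`. -/
theorem stmt_7 {n d : ℕ} (P : Matrix (Fin n) (Fin n) ℝ)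
    (hPnn : ∀ i j, 0 ≤ P i j)
    (hProw : ∀ i, ∑ j, P i j = 1)
    (hPcol : ∀ j, ∑ i, P i j = 1)
    (hσ : sigma2 P < 1)
    (χ : Set (EuclideanSpace ℝ (Fin d)))
    (hχne : χ.Nonempty) (hχcomp : IsCompact χ) (hχconv : Convex ℝ χ)
    (ψ : EuclideanSpace ℝ (Fin d) → ℝ) (hψ : StronglyConvexOne ψ)
    (α : ℕ → ℝ) (hαpos : ∀ t, 0 < α t) (hαmono : ∀ s t : ℕ, s ≤ t → α t ≤ α s)
    (m : Fin n → ℕ)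
    (A : ∀ i : Fin n, Matrix (Fin (m i)) (Fin d) ℝ)
    (g : Fin n → ℕ → EuclideanSpace ℝ (Fin d))
    (lam : ∀ i : Fin n, ℕ → EuclideanSpace ℝ (Fin (m i)))
    (Lf ζmax : ℝ)
    (hg : ∀ i : Fin n, ∀ t : ℕ, 1 ≤ t → ‖g i t‖ ≤ Lf)
    (hlam : ∀ i : Fin n, ∀ t : ℕ, 1 ≤ t →
      ‖Matrix.toEuclideanLin (A i)ᵀ (lam i t)‖ ≤ ζmax)
    (z : Fin n → ℕ → EuclideanSpace ℝ (Fin d))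
    (hz1 : ∀ i, z i 1 = 0)
    (hzrec : ∀ i : Fin n, ∀ t : ℕ, 1 ≤ t →
      z i (t + 1) = (∑ j, P j i • z j t) + g i t
        + Matrix.toEuclideanLin (A i)ᵀ (lam i (t + 1)))
    (x : Fin n → ℕ → EuclideanSpace ℝ (Fin d)) (θ : ℕ → EuclideanSpace ℝ (Fin d))
    (hxmem : ∀ i : Fin n, ∀ t : ℕ, 1 ≤ t → x i t ∈ χ)
    (hxmin : ∀ i : Fin n, ∀ t : ℕ, 1 ≤ t → ∀ w ∈ χ,
      ⟪z i t, x i t⟫ + (α (t - 1))⁻¹ * ψ (x i t)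
        ≤ ⟪z i t, w⟫ + (α (t - 1))⁻¹ * ψ w)
    (hθmem : ∀ t : ℕ, 1 ≤ t → θ t ∈ χ)
    (hθmin : ∀ t : ℕ, 1 ≤ t → ∀ w ∈ χ,
      ⟪(n : ℝ)⁻¹ • ∑ j, z j t, θ t⟫ + (α (t - 1))⁻¹ * ψ (θ t)
        ≤ ⟪(n : ℝ)⁻¹ • ∑ j, z j t, w⟫ + (α (t - 1))⁻¹ * ψ w)
    (i : Fin n) (t : ℕ) (ht : 1 ≤ t) :
    ‖θ t - x i t‖ ≤ α (t - 1) * Real.sqrt n * (Lf + ζmax) / (1 - sigma2 P) := by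
  have hn : 0 < n := i.pos
  have hn0 : (n:ℝ) ≠ 0 := by exact_mod_cast hn.ne'
  set σ := sigma2 P with hσdef
  set C := Lf + ζmax with hCdef
  have hC0 : 0 ≤ C := by
    have h1 := hg i 1 le_rfl
    have h2 := hlam i 1 le_rfl
    have h3 := norm_nonneg (g i 1)
    have h4 := norm_nonneg (Matrix.toEuclideanLin (A i)ᵀ (lam i 1))
    rw [hCdef]; linarith
  have hσ0 : 0 ≤ σ := sigma2_nonneg P
  have hσ1 : 0 < 1 - σ := by linarith
  set B := Real.sqrt n * C / (1 - σ) with hB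
  have hB0 : 0 ≤ B := by positivity
  set e : Fin n → ℕ → EuclideanSpace ℝ (Fin d) :=
    fun j s => z j s - (n:ℝ)⁻¹ • ∑ l, z l s with he
  have hsum0 : ∀ s, ∑ j, e j s = 0 := by
    intro s
    simp only [he]
    rw [Finset.sum_sub_distrib, Finset.sum_const, Finset.card_univ, Fintype.card_fin,
      ← Nat.cast_smul_eq_nsmul ℝ, smul_smul, mul_inv_cancel₀ hn0, one_smul, sub_self]
  have hsum0' : ∀ s (k : Fin d), ∑ j, e j s k = 0 := by
    intro s k
    have h := congrArg (fun v : EuclideanSpace ℝ (Fin d) => v k) (hsum0 s)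
    simpa [WithLp.ofLp_sum, Finset.sum_apply] using h
  -- norm squared identities
  have hnsq : ∀ (v : EuclideanSpace ℝ (Fin d)), ‖v‖ ^ 2 = ∑ k, v k ^ 2 := by
    intro v
    rw [PiLp.norm_sq_eq_of_L2]
    exact Finset.sum_congr rfl fun k _ => by rw [Real.norm_eq_abs, sq_abs]
  have hEsq : ∀ (E : PiLp 2 fun _ : Fin n => EuclideanSpace ℝ (Fin d)),
      ‖E‖ ^ 2 = ∑ j, ‖E j‖ ^ 2 := fun E => PiLp.norm_sq_eq_of_L2 _ E
  -- the induction
  have hEbound : ∀ s, 1 ≤ s →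
      ‖(show PiLp 2 fun _ : Fin n => EuclideanSpace ℝ (Fin d) from WithLp.toLp 2 fun j => e j s)‖ ≤ B := by
    intro s hs
    induction s, hs using Nat.le_induction with
    | base =>
      have h0 : (show PiLp 2 fun _ : Fin n => EuclideanSpace ℝ (Fin d) from WithLp.toLp 2 fun j => e j 1)
          = 0 := by
        rw [WithLp.ext_iff]; funext j
        simp [he, hz1, Finset.sum_const]
      rw [h0, norm_zero]; exact hB0
    | succ s hs ih =>
      set u : Fin n → EuclideanSpace ℝ (Fin d) :=
        fun j => g j s + Matrix.toEuclideanLin (A j)ᵀ (lam j (s+1)) with hu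
      set ub : EuclideanSpace ℝ (Fin d) := (n:ℝ)⁻¹ • ∑ j, u j with hub
      have hzsum : ∑ l, z l (s+1) = (∑ l, z l s) + ∑ l, u l := by
        calc ∑ l, z l (s+1) = ∑ l, ((∑ mm, P mm l • z mm s) + u l) := by
              refine Finset.sum_congr rfl fun l _ => ?_
              rw [hzrec l s hs, hu, add_assoc]
          _ = (∑ l, ∑ mm, P mm l • z mm s) + ∑ l, u l := Finset.sum_add_distrib
          _ = (∑ mm, (∑ l, P mm l) • z mm s) + ∑ l, u l := by
              congr 1
              rw [Finset.sum_comm]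
              exact Finset.sum_congr rfl fun mm _ => (Finset.sum_smul).symm
          _ = (∑ l, z l s) + ∑ l, u l := by
              congr 1
              exact Finset.sum_congr rfl fun mm _ => by rw [hProw mm, one_smul]
      have hustep : ∀ j, e j (s+1) = (∑ l, P l j • e l s) + (u j - ub) := by
        intro j
        have h1 : ∑ l, P l j • e l s
            = (∑ l, P l j • z l s) - (n:ℝ)⁻¹ • ∑ mm, z mm s := by
          calc ∑ l, P l j • e l s
              = ∑ l, (P l j • z l s - P l j • ((n:ℝ)⁻¹ • ∑ mm, z mm s)) := by
                refine Finset.sum_congr rfl fun l _ => ?_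
                simp only [he, smul_sub]
            _ = (∑ l, P l j • z l s) - (∑ l, P l j) • ((n:ℝ)⁻¹ • ∑ mm, z mm s) := by
                rw [Finset.sum_sub_distrib, Finset.sum_smul]
            _ = (∑ l, P l j • z l s) - (n:ℝ)⁻¹ • ∑ mm, z mm s := by
                rw [hPcol j, one_smul]
        simp only [he]
        rw [hzrec j s hs, hzsum, smul_add, h1, hub, hu]
        abel_nf
        ac_rfl
      have hsplit : (show PiLp 2 fun _ : Fin n => EuclideanSpace ℝ (Fin d)
            from WithLp.toLp 2 fun j => e j (s+1))
          = (show PiLp 2 fun _ : Fin n => EuclideanSpace ℝ (Fin d)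
            from WithLp.toLp 2 fun j => ∑ l, P l j • e l s)
          + (show PiLp 2 fun _ : Fin n => EuclideanSpace ℝ (Fin d)
            from WithLp.toLp 2 fun j => u j - ub) := by
        rw [WithLp.ext_iff]; funext j
        exact hustep j
      rw [hsplit]
      refine (norm_add_le _ _).trans ?_
      have hPv : ‖(show PiLp 2 fun _ : Fin n => EuclideanSpace ℝ (Fin d)
          from WithLp.toLp 2 fun j => ∑ l, P l j • e l s)‖ ≤ σ * B := by
        have hEs : ‖(show PiLp 2 fun _ : Fin n => EuclideanSpace ℝ (Fin d)
            from WithLp.toLp 2 fun j => ∑ l, P l j • e l s)‖ ^ 2 = ∑ j, ‖∑ l, P l j • e l s‖ ^ 2 :=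
          hEsq _
        have hcoord : ∀ j : Fin n, ‖∑ l, P l j • e l s‖ ^ 2
            = ∑ k, (∑ l, P l j * e l s k) ^ 2 := by
          intro j
          rw [hnsq]
          refine Finset.sum_congr rfl fun k _ => ?_
          congr 1
          rw [WithLp.ofLp_sum, Finset.sum_apply]
          exact Finset.sum_congr rfl fun l _ => rfl
        have h1 : ‖(show PiLp 2 fun _ : Fin n => EuclideanSpace ℝ (Fin d)
            from WithLp.toLp 2 fun j => ∑ l, P l j • e l s)‖ ^ 2 ≤ σ ^ 2 * ∑ l, ‖e l s‖ ^ 2 := by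
          rw [hEs]
          calc ∑ j, ‖∑ l, P l j • e l s‖ ^ 2
              = ∑ j, ∑ k, (∑ l, P l j * e l s k) ^ 2 :=
                Finset.sum_congr rfl fun j _ => hcoord j
            _ = ∑ k, ∑ j, (∑ l, P l j * e l s k) ^ 2 := Finset.sum_comm
            _ ≤ ∑ k : Fin d, σ ^ 2 * ∑ l, (e l s k) ^ 2 :=
                Finset.sum_le_sum fun k _ =>
                  spectral P hPnn hProw hPcol hσ (fun l => e l s k) (hsum0' s k)
            _ = σ ^ 2 * ∑ l, ‖e l s‖ ^ 2 := by
                rw [← Finset.mul_sum]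
                congr 1
                rw [Finset.sum_comm]
                exact Finset.sum_congr rfl fun l _ => (hnsq (e l s)).symm
        have h2 : ∑ l, ‖e l s‖ ^ 2 ≤ B ^ 2 := by
          have hEs2 : ‖(show PiLp 2 fun _ : Fin n => EuclideanSpace ℝ (Fin d)
              from WithLp.toLp 2 fun j => e j s)‖ ^ 2 = ∑ j, ‖e j s‖ ^ 2 := hEsq _
          rw [← hEs2]
          have hnn := norm_nonneg (show PiLp 2 fun _ : Fin n => EuclideanSpace ℝ (Fin d)
            from WithLp.toLp 2 fun j => e j s)
          nlinarith [ih]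
        refine sq_le_imp (norm_nonneg _) (by positivity) ?_
        calc ‖(show PiLp 2 fun _ : Fin n => EuclideanSpace ℝ (Fin d)
            from WithLp.toLp 2 fun j => ∑ l, P l j • e l s)‖ ^ 2
            ≤ σ ^ 2 * ∑ l, ‖e l s‖ ^ 2 := h1
          _ ≤ σ ^ 2 * B ^ 2 := by nlinarith [h2, sq_nonneg σ]
          _ = (σ * B) ^ 2 := by ring
      have hUv : ‖(show PiLp 2 fun _ : Fin n => EuclideanSpace ℝ (Fin d)
          from WithLp.toLp 2 fun j => u j - ub)‖ ≤ Real.sqrt n * C := by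
        have husum : ∑ j, u j = (n:ℝ) • ub := by
          rw [hub, smul_smul, mul_inv_cancel₀ hn0, one_smul]
        have hterm : ∀ j : Fin n, ‖u j - ub‖ ^ 2
            = ‖u j‖ ^ 2 - 2 * ⟪u j, ub⟫ + ‖ub‖ ^ 2 := by
          intro j
          rw [norm_sub_sq_real]
        have hip : ∑ j, ⟪u j, ub⟫ = (n:ℝ) * ‖ub‖ ^ 2 := by
          rw [← sum_inner, husum, real_inner_smul_left, real_inner_self_eq_norm_sq]
        have huj : ∀ j : Fin n, ‖u j‖ ^ 2 ≤ C ^ 2 := by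
          intro j
          have hadd := norm_add_le (g j s) (Matrix.toEuclideanLin (A j)ᵀ (lam j (s+1)))
          have hg1 := hg j s hs
          have hl1 := hlam j (s+1) (le_trans hs (Nat.le_succ s))
          have hle : ‖u j‖ ≤ C := by
            rw [hu, hCdef]
            exact hadd.trans (add_le_add hg1 hl1)
          nlinarith [norm_nonneg (u j)]
        have hsum2 : ∑ j, ‖u j - ub‖ ^ 2 ≤ (n:ℝ) * C ^ 2 := by
          have h1 : ∑ j, ‖u j - ub‖ ^ 2
              = (∑ j, ‖u j‖ ^ 2) - 2 * ((n:ℝ) * ‖ub‖ ^ 2) + (n:ℝ) * ‖ub‖ ^ 2 := by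
            rw [Finset.sum_congr rfl fun j _ => hterm j]
            rw [Finset.sum_add_distrib, Finset.sum_sub_distrib]
            rw [← Finset.mul_sum, hip]
            rw [Finset.sum_const, Finset.card_univ, Fintype.card_fin, nsmul_eq_mul]
          have h2 : ∑ j, ‖u j‖ ^ 2 ≤ (n:ℝ) * C ^ 2 := by
            calc ∑ j, ‖u j‖ ^ 2 ≤ ∑ _j : Fin n, C ^ 2 :=
                  Finset.sum_le_sum fun j _ => huj j
              _ = (n:ℝ) * C ^ 2 := by
                  rw [Finset.sum_const, Finset.card_univ, Fintype.card_fin, nsmul_eq_mul]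
          have h3 : 0 ≤ (n:ℝ) * ‖ub‖ ^ 2 := by positivity
          linarith
        have hEs : ‖(show PiLp 2 fun _ : Fin n => EuclideanSpace ℝ (Fin d)
            from WithLp.toLp 2 fun j => u j - ub)‖ ^ 2 = ∑ j, ‖u j - ub‖ ^ 2 := hEsq _
        refine sq_le_imp (norm_nonneg _) (by positivity) ?_
        rw [hEs]
        calc ∑ j, ‖u j - ub‖ ^ 2 ≤ (n:ℝ) * C ^ 2 := hsum2
          _ = (Real.sqrt n * C) ^ 2 := by
              rw [mul_pow, Real.sq_sqrt (Nat.cast_nonneg n)]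
      have : σ * B + Real.sqrt n * C = B := by
        rw [hB]; field_simp; ring
      linarith [hPv, hUv]
  -- conclude
  have heit : ‖e i t‖ ≤ B := by
    have h1 : ‖e i t‖ ^ 2 ≤ ∑ j, ‖e j t‖ ^ 2 :=
      Finset.single_le_sum (f := fun j => ‖e j t‖ ^ 2) (fun j _ => sq_nonneg _)
        (Finset.mem_univ i)
    have h2 := hEbound t ht
    replace h1 := h1.trans_eq (hEsq (show PiLp 2 fun _ : Fin n => EuclideanSpace ℝ (Fin d)
      from WithLp.toLp 2 fun j => e j t)).symm
    have h3 : ‖e i t‖ ^ 2 ≤ B ^ 2 := by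
      refine h1.trans ?_
      have hnn := norm_nonneg (show PiLp 2 fun _ : Fin n => EuclideanSpace ℝ (Fin d)
        from WithLp.toLp 2 fun j => e j t)
      nlinarith [h2]
    nlinarith [norm_nonneg (e i t), hB0, h3]
  have hstab := stability hχconv hψ (hαpos (t-1)) ((n:ℝ)⁻¹ • ∑ j, z j t) (z i t)
    (θ t) (x i t) (hθmem t ht) (hxmem i t ht) (hθmin t ht) (hxmin i t ht)
  have hne : ‖(n:ℝ)⁻¹ • ∑ j, z j t - z i t‖ = ‖e i t‖ := by
    rw [he, norm_sub_rev]
  rw [hne] at hstab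
  calc ‖θ t - x i t‖ ≤ α (t-1) * ‖e i t‖ := hstab
    _ ≤ α (t-1) * B := mul_le_mul_of_nonneg_left heit (hαpos (t-1)).le
    _ = α (t - 1) * Real.sqrt n * C / (1 - σ) := by rw [hB]; ring
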